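/- For d ≥ 2 and ℓ > 0, the discriminant of the quadratic (d−1)σ² − (d−1−(ℓ−1)(r−1))σ + (r−1) in σ, namely D(r) = (d−1−(ℓ−1)(r−1))² − 4(d−1)(r−1), is strictly positive for 1 < r < r* = (d+ℓ)/(ℓ+√d); hence the two roots σ₃ ≤ σ₂ are real and distinct (σ₃ < σ₂) in this range. -/

import Mathlib

/-- For d ≥ 2, ℓ > 0, 1 < r < r* = (d+ℓ)/(ℓ+√d), the discriminant
D(r) = (d−1−(ℓ−1)(r−1))² − 4(d−1)(r−1) is strictly positive, and the quadratic
has two distinct real roots σ₃ < σ₂. -/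
theorem stmt19 (d ℓ r : ℝ) (hd : 2 ≤ d) (hℓ : 0 < ℓ) (hr1 : 1 < r)
    (hr2 : r < (d + ℓ) / (ℓ + Real.sqrt d)) :
    0 < (d - 1 - (ℓ - 1) * (r - 1)) ^ 2 - 4 * (d - 1) * (r - 1) ∧
    ∃ σ₃ σ₂ : ℝ, σ₃ < σ₂ ∧
      (d - 1) * σ₃ ^ 2 - (d - 1 - (ℓ - 1) * (r - 1)) * σ₃ + (r - 1) = 0 ∧
      (d - 1) * σ₂ ^ 2 - (d - 1 - (ℓ - 1) * (r - 1)) * σ₂ + (r - 1) = 0 := by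
  obtain ⟨S, hS0, hSsq⟩ : ∃ S : ℝ, 0 ≤ S ∧ S ^ 2 = d :=
    ⟨Real.sqrt d, Real.sqrt_nonneg _, Real.sq_sqrt (by linarith)⟩
  obtain ⟨L, hL0, hLsq⟩ : ∃ L : ℝ, 0 ≤ L ∧ L ^ 2 = ℓ :=
    ⟨Real.sqrt ℓ, Real.sqrt_nonneg _, Real.sq_sqrt hℓ.le⟩
  subst hSsq hLsq
  rw [Real.sqrt_sq hS0] at hr2
  have hS1 : 1 < S := by nlinarith
  have hden : (0 : ℝ) < L ^ 2 + S := by positivity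
  have h2 : r * (L ^ 2 + S) < S ^ 2 + L ^ 2 := by
    rw [div_eq_mul_inv] at hr2
    calc r * (L ^ 2 + S) < (S ^ 2 + L ^ 2) * (L ^ 2 + S)⁻¹ * (L ^ 2 + S) := by
          exact mul_lt_mul_of_pos_right hr2 hden
      _ = S ^ 2 + L ^ 2 := by field_simp
  have hs0 : 0 < r - 1 := by linarith
  -- key inequality : (r-1)(L+1)^2 < S^2 - 1
  have key1 : (r - 1) * (L + 1) ^ 2 < S ^ 2 - 1 := by
    have hfac : 0 ≤ (S - 1) * (S - L) ^ 2 :=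
      mul_nonneg (by linarith) (sq_nonneg _)
    have hmul := mul_lt_mul_of_pos_right h2 (show (0:ℝ) < (L + 1) ^ 2 by positivity)
    nlinarith [hmul, hfac, mul_pos hs0 hden]
  have hf1 : 0 < (S ^ 2 - 1) - (r - 1) * (L + 1) ^ 2 := by linarith
  have hf2 : 0 < (S ^ 2 - 1) - (r - 1) * (L - 1) ^ 2 := by
    nlinarith [mul_nonneg hs0.le hL0]
  have hD : 0 < (S ^ 2 - 1 - (L ^ 2 - 1) * (r - 1)) ^ 2 - 4 * (S ^ 2 - 1) * (r - 1) := by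
    have := mul_pos hf1 hf2
    nlinarith [this]
  refine ⟨hD, ?_⟩
  set B := S ^ 2 - 1 - (L ^ 2 - 1) * (r - 1) with hB
  set D := B ^ 2 - 4 * (S ^ 2 - 1) * (r - 1) with hDdef
  have ha : (0 : ℝ) < S ^ 2 - 1 := by nlinarith
  obtain ⟨q, hq0, hq⟩ : ∃ q : ℝ, 0 < q ∧ q ^ 2 = D :=
    ⟨Real.sqrt D, Real.sqrt_pos.mpr hD, Real.sq_sqrt hD.le⟩
  have ha' : S ^ 2 - 1 ≠ 0 := ne_of_gt ha
  refine ⟨(B - q) / (2 * (S ^ 2 - 1)), (B + q) / (2 * (S ^ 2 - 1)), ?_, ?_, ?_⟩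
  · apply div_lt_div_of_pos_right (by linarith) (by positivity)
  · rw [hDdef] at hq
    field_simp
    linear_combination hq
  · rw [hDdef] at hq
    field_simp
    linear_combination hq
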